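/- Gradient–gradient covariance identity for the spin model (Lemma 6.2): For all f, g: V → ℝ, μ_★[(𝒰'(J), df)(𝒰'(J), dg)] = Σ_{e∈E} μ_★[𝒰''(J_e)] (df)_e (dg)_e, where under μ_★ we write J = dθ and (𝒰'(J), df) = Σ_{e∈E} 𝒰'(J_e) (df)_e. -/

import Mathlib

open MeasureTheory Real
noncomputable section

/-- Gradient of a `G`-valued function on the vertices: `(df)_e = f(tgt e) - f(src e)`. -/
def grad {V E G : Type*} [AddCommGroup G] (src tgt : E → V) (f : V → G) : E → G :=
  fun e => f (tgt e) - f (src e)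

/-- The spin weight `w(α) = Σ_{n∈ℤ} e^{-𝒱(n)} e^{inα}`, written with `p n = e^{-𝒱(n)}`. -/
def wgt (p : ℤ → ℝ) (α : ℝ) : ℝ := ∑' n : ℤ, p n * Real.cos (n * α)

/-- The dual spin potential `𝒰 = -log w`. -/
def spinU (p : ℤ → ℝ) : ℝ → ℝ := fun t => -Real.log (wgt p t)

/-- Coordinates for the torus `(ℝ/2πℤ)^V`: the product over `V` of Lebesgue measure on the
fundamental domain `(-π, π]`. -/
def torusBox (V : Type*) [Fintype V] : Measure (V → ℝ) :=
  Measure.pi fun _ => volume.restrict (Set.Ioc (-π) π)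

/-- Expectation with respect to the ★-spin measure `μ_★(dθ) ∝ Π_e w((dθ)_e) dθ` on the torus
`(ℝ/2πℤ)^V` (normalising constants cancel in the ratio). -/
def starSpinExp {V E : Type*} [Fintype V] [Fintype E] (src tgt : E → V)
    (p : ℤ → ℝ) (F : (V → ℝ) → ℝ) : ℝ :=
  (∫ θ, F θ * ∏ e, wgt p (grad src tgt θ e) ∂ torusBox V) /
    ∫ θ, ∏ e, wgt p (grad src tgt θ e) ∂ torusBox V

namespace SpinAux
section S1



variable {p : ℤ → ℝ}

def W1 (p : ℤ → ℝ) (α : ℝ) : ℝ := ∑' n : ℤ, p n * (-Real.sin ((n : ℝ) * α) * (n : ℝ))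

def W2 (p : ℤ → ℝ) (α : ℝ) : ℝ :=
  ∑' n : ℤ, p n * (-(Real.cos ((n : ℝ) * α) * (n : ℝ)) * (n : ℝ))

lemma sq_abs_int (n : ℤ) : |(n : ℝ)| ≤ (n : ℝ) ^ 2 := by
  rcases eq_or_ne n 0 with h | h
  · simp [h]
  · have h1 : (1 : ℝ) ≤ |(n : ℝ)| := by
      have := Int.one_le_abs (by exact_mod_cast h : n ≠ 0)
      calc (1 : ℝ) ≤ (|n| : ℤ) := by exact_mod_cast this
        _ = |(n : ℝ)| := by push_cast; rfl
    nlinarith [abs_nonneg ((n : ℝ)), sq_abs ((n : ℝ))]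

lemma sumP1 (hnonneg : ∀ n : ℤ, 0 ≤ p n)
    (hsum : Summable fun n : ℤ => (n : ℝ) ^ 2 * p n) :
    Summable fun n : ℤ => |(n : ℝ)| * p n := by
  refine Summable.of_nonneg_of_le (fun n => mul_nonneg (abs_nonneg _) (hnonneg n)) (fun n => ?_) hsum
  exact mul_le_mul_of_nonneg_right (sq_abs_int n) (hnonneg n)

lemma sumP (hnonneg : ∀ n : ℤ, 0 ≤ p n)
    (hsum : Summable fun n : ℤ => (n : ℝ) ^ 2 * p n) :
    Summable p := by
  have hind : Summable (fun n : ℤ => if n = 0 then p 0 else 0) := by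
    apply summable_of_ne_finset_zero (s := {0})
    intro n hn
    simp only [Finset.mem_singleton] at hn
    simp [hn]
  refine Summable.of_nonneg_of_le hnonneg (fun n => ?_) (hsum.add hind)
  rcases eq_or_ne n 0 with h | h
  · simp [h]
  · have h1 : (1 : ℝ) ≤ (n : ℝ) ^ 2 := by
      have := sq_abs_int n
      have h2 : (1 : ℝ) ≤ |(n : ℝ)| := by
        have := Int.one_le_abs (by exact_mod_cast h : n ≠ 0)
        calc (1 : ℝ) ≤ (|n| : ℤ) := by exact_mod_cast this
          _ = |(n : ℝ)| := by push_cast; rfl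
      linarith
    have : p n ≤ (n : ℝ) ^ 2 * p n := le_mul_of_one_le_left (hnonneg n) h1
    rw [if_neg h, add_zero]
    linarith

lemma sumW (hnonneg : ∀ n : ℤ, 0 ≤ p n)
    (hsum : Summable fun n : ℤ => (n : ℝ) ^ 2 * p n) (α : ℝ) :
    Summable fun n : ℤ => p n * Real.cos (n * α) := by
  refine Summable.of_norm_bounded (sumP hnonneg hsum) (fun n => ?_)
  rw [Real.norm_eq_abs, abs_mul, abs_of_nonneg (hnonneg n)]
  nlinarith [Real.abs_cos_le_one ((n : ℝ) * α), abs_nonneg (Real.cos ((n : ℝ) * α)),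
    hnonneg n]

lemma absW (hnonneg : ∀ n : ℤ, 0 ≤ p n)
    (hsum : Summable fun n : ℤ => (n : ℝ) ^ 2 * p n) (α : ℝ) :
    |wgt p α| ≤ ∑' n : ℤ, p n := by
  have h := norm_tsum_le_tsum_norm (f := fun n : ℤ => p n * Real.cos (n * α)) ?_
  · rw [Real.norm_eq_abs] at h
    refine h.trans (Summable.tsum_le_tsum (fun n => ?_) ?_ (sumP hnonneg hsum))
    · rw [Real.norm_eq_abs, abs_mul, abs_of_nonneg (hnonneg n)]
      nlinarith [Real.abs_cos_le_one ((n : ℝ) * α), hnonneg n]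
    · exact ((sumW hnonneg hsum α).norm)
  · exact ((sumW hnonneg hsum α).norm)



variable (hnonneg : ∀ n : ℤ, 0 ≤ p n) (hsum : Summable fun n : ℤ => (n : ℝ) ^ 2 * p n)
include hnonneg

lemma bound1 (n : ℤ) (y : ℝ) :
    ‖p n * (-Real.sin ((n : ℝ) * y) * (n : ℝ))‖ ≤ |(n : ℝ)| * p n := by
  rw [Real.norm_eq_abs, abs_mul, abs_of_nonneg (hnonneg n)]
  have h : |(-Real.sin ((n : ℝ) * y) * (n : ℝ))| ≤ |(n : ℝ)| := by
    rw [abs_mul, abs_neg]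
    calc |Real.sin ((n : ℝ) * y)| * |(n : ℝ)| ≤ 1 * |(n : ℝ)| :=
          mul_le_mul_of_nonneg_right (abs_sin_le_one _) (abs_nonneg _)
      _ = |(n : ℝ)| := one_mul _
  calc p n * |(-Real.sin ((n : ℝ) * y) * (n : ℝ))| ≤ p n * |(n : ℝ)| :=
        mul_le_mul_of_nonneg_left h (hnonneg n)
    _ = |(n : ℝ)| * p n := mul_comm _ _

lemma bound2 (n : ℤ) (y : ℝ) :
    ‖p n * (-(Real.cos ((n : ℝ) * y) * (n : ℝ)) * (n : ℝ))‖ ≤ (n : ℝ) ^ 2 * p n := by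
  rw [Real.norm_eq_abs, abs_mul, abs_of_nonneg (hnonneg n)]
  have h : |(-(Real.cos ((n : ℝ) * y) * (n : ℝ)) * (n : ℝ))| ≤ (n : ℝ) ^ 2 := by
    rw [abs_mul, abs_neg, abs_mul]
    have h2 : |(n : ℝ)| * |(n : ℝ)| = (n : ℝ) ^ 2 := by
      rw [← abs_mul, ← sq, abs_of_nonneg (sq_nonneg _)]
    calc |Real.cos ((n : ℝ) * y)| * |(n : ℝ)| * |(n : ℝ)|
        ≤ 1 * |(n : ℝ)| * |(n : ℝ)| := by
          refine mul_le_mul_of_nonneg_right ?_ (abs_nonneg _)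
          exact mul_le_mul_of_nonneg_right (abs_cos_le_one _) (abs_nonneg _)
      _ = (n : ℝ) ^ 2 := by rw [one_mul, h2]
  calc p n * |(-(Real.cos ((n : ℝ) * y) * (n : ℝ)) * (n : ℝ))| ≤ p n * (n : ℝ) ^ 2 :=
        mul_le_mul_of_nonneg_left h (hnonneg n)
    _ = (n : ℝ) ^ 2 * p n := mul_comm _ _

include hsum

lemma hasDerivW (α : ℝ) : HasDerivAt (wgt p) (W1 p α) α := by
  refine hasDerivAt_tsum (u := fun n : ℤ => |(n : ℝ)| * p n) (sumP1 hnonneg hsum)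
    (g := fun n y => p n * Real.cos ((n : ℝ) * y))
    (g' := fun n y => p n * (-Real.sin ((n : ℝ) * y) * (n : ℝ)))
    (fun n y => ?_) (fun n y => bound1 hnonneg n y) (y₀ := 0) ?_ α
  · simpa using ((((hasDerivAt_id y).const_mul ((n : ℝ))).cos).const_mul (p n))
  · simpa using (sumP hnonneg hsum)

lemma hasDerivW1 (α : ℝ) : HasDerivAt (W1 p) (W2 p α) α := by
  refine hasDerivAt_tsum (u := fun n : ℤ => (n : ℝ) ^ 2 * p n) hsum
    (g := fun n y => p n * (-Real.sin ((n : ℝ) * y) * (n : ℝ)))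
    (g' := fun n y => p n * (-(Real.cos ((n : ℝ) * y) * (n : ℝ)) * (n : ℝ)))
    (fun n y => ?_) (fun n y => bound2 hnonneg n y) (y₀ := 0) ?_ α
  · simpa using
      (((((hasDerivAt_id y).const_mul ((n : ℝ))).sin).neg.mul_const ((n : ℝ))).const_mul (p n))
  · simpa using summable_zero

lemma contW : Continuous (wgt p) := by
  have h : Differentiable ℝ (wgt p) := fun α => (hasDerivW hnonneg hsum α).differentiableAt
  exact h.continuous

lemma contW1 : Continuous (W1 p) := by
  have h : Differentiable ℝ (W1 p) := fun α => (hasDerivW1 hnonneg hsum α).differentiableAt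
  exact h.continuous

lemma contW2 : Continuous (W2 p) := by
  refine continuous_tsum (u := fun n : ℤ => (n : ℝ) ^ 2 * p n) (fun n => ?_) hsum
    (fun n y => bound2 hnonneg n y)
  fun_prop

lemma absW1 (α : ℝ) : |W1 p α| ≤ ∑' n : ℤ, |(n : ℝ)| * p n := by
  have hsummand : Summable fun n : ℤ => ‖p n * (-Real.sin ((n : ℝ) * α) * (n : ℝ))‖ :=
    Summable.of_nonneg_of_le (fun n => norm_nonneg _) (fun n => bound1 hnonneg n α)
      (sumP1 hnonneg hsum)
  have h := norm_tsum_le_tsum_norm hsummand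
  rw [Real.norm_eq_abs] at h
  exact h.trans (Summable.tsum_le_tsum (fun n => bound1 hnonneg n α) hsummand (sumP1 hnonneg hsum))

lemma absW2 (α : ℝ) : |W2 p α| ≤ ∑' n : ℤ, (n : ℝ) ^ 2 * p n := by
  have hsummand : Summable fun n : ℤ => ‖p n * (-(Real.cos ((n : ℝ) * α) * (n : ℝ)) * (n : ℝ))‖ :=
    Summable.of_nonneg_of_le (fun n => norm_nonneg _) (fun n => bound2 hnonneg n α) hsum
  have h := norm_tsum_le_tsum_norm hsummand
  rw [Real.norm_eq_abs] at h
  exact h.trans (Summable.tsum_le_tsum (fun n => bound2 hnonneg n α) hsummand hsum)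



variable (hw : ∀ α : ℝ, 0 < wgt p α)
include hw

lemma derivU (t : ℝ) : deriv (spinU p) t = -(W1 p t / wgt p t) :=
  ((((hasDerivW hnonneg hsum t).log (hw t).ne')).neg).deriv

lemma derivU2 (t : ℝ) :
    deriv (deriv (spinU p)) t
      = (W1 p t * W1 p t - W2 p t * wgt p t) / wgt p t ^ 2 := by
  have hfun : deriv (spinU p) = fun t => -(W1 p t / wgt p t) :=
    funext fun t => derivU hnonneg hsum hw t
  rw [hfun]
  have h : HasDerivAt (fun t => -(W1 p t / wgt p t))
      (-((W2 p t * wgt p t - W1 p t * W1 p t) / wgt p t ^ 2)) t :=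
    (((hasDerivW1 hnonneg hsum t).div (hasDerivW hnonneg hsum t) (hw t).ne')).neg
  rw [h.deriv]; ring


variable {V E : Type*} [Fintype V] [Fintype E]

end S1

section S2
variable {V E : Type*} [Fintype V] [Fintype E]

instance finiteTorus (V : Type*) [Fintype V] : IsFiniteMeasure (torusBox V) := by
  unfold torusBox
  have : ∀ _ : V, IsFiniteMeasure (volume.restrict (Set.Ioc (-π) π)) := fun _ =>
    ⟨by rw [Measure.restrict_apply_univ]; exact measure_Ioc_lt_top⟩
  infer_instance

lemma wgt_periodic (p : ℤ → ℝ) : Function.Periodic (wgt p) (2 * π) := by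
  intro x
  unfold wgt
  congr 1
  funext n
  congr 1
  have : (n : ℝ) * (x + 2 * π) = (n : ℝ) * x + (n : ℤ) * (2 * π) := by push_cast; ring
  rw [this, Real.cos_add_int_mul_two_pi]

lemma shift_invariant (src tgt : E → V) (p : ℤ → ℝ) (hcont : Continuous (wgt p)) (c : V → ℝ) :
    ∫ θ, ∏ e, wgt p (grad src tgt θ e + grad src tgt c e) ∂ torusBox V
      = ∫ θ, ∏ e, wgt p (grad src tgt θ e) ∂ torusBox V := by
  haveI : Fact (0 < 2 * π) := ⟨Real.two_pi_pos⟩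
  set T : ℝ := 2 * π with hT
  have hper : Function.Periodic (wgt p) T := wgt_periodic p
  set Wb : AddCircle T → ℝ := hper.lift with hWbdef
  have hWb : Continuous Wb := by
    rw [isQuotientMap_quotient_mk'.continuous_iff]
    exact hcont
  set F : (V → AddCircle T) → ℝ := fun x => ∏ e, Wb (x (tgt e) - x (src e)) with hFdef
  have hFc : Continuous F := by
    apply continuous_finset_prod
    intro e _
    exact hWb.comp ((continuous_apply (tgt e)).sub (continuous_apply (src e)))
  have hmp : MeasurePreserving (fun (θ : V → ℝ) (v : V) => ((θ v : AddCircle T)))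
      (torusBox V) (Measure.pi fun _ => (volume : Measure (AddCircle T))) := by
    apply measurePreserving_pi
    intro v
    have h := AddCircle.measurePreserving_mk (T := T) (-π)
    have he : Set.Ioc (-π) (-π + T) = Set.Ioc (-π) π := by rw [hT]; congr 1; ring
    rwa [he] at h
  have key : ∀ (G : (V → AddCircle T) → ℝ), AEStronglyMeasurable G
      (Measure.pi fun _ => (volume : Measure (AddCircle T))) →
      ∫ θ, G (fun v => (θ v : AddCircle T)) ∂ torusBox V
        = ∫ x, G x ∂ (Measure.pi fun _ => (volume : Measure (AddCircle T))) := by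
    intro G hG
    rw [← hmp.map_eq, integral_map hmp.measurable.aemeasurable]
    rwa [hmp.map_eq]
  have hcoe : ∀ (θ : V → ℝ) (e : E),
      wgt p (grad src tgt θ e + grad src tgt c e)
        = Wb (((fun v => (θ v : AddCircle T)) + (fun v => (c v : AddCircle T))) (tgt e)
            - ((fun v => (θ v : AddCircle T)) + (fun v => (c v : AddCircle T))) (src e)) := by
    intro θ e
    rw [← Function.Periodic.lift_coe hper (grad src tgt θ e + grad src tgt c e), ← hWbdef]
    congr 1
    show (QuotientAddGroup.mk _ : AddCircle T) = _
    simp only [Pi.add_apply, grad]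
    rw [show θ (tgt e) - θ (src e) + (c (tgt e) - c (src e))
        = (θ (tgt e) + c (tgt e)) - (θ (src e) + c (src e)) by ring]
    rfl
  have hcoe0 : ∀ (θ : V → ℝ) (e : E),
      wgt p (grad src tgt θ e)
        = Wb ((fun v => (θ v : AddCircle T)) (tgt e) - (fun v => (θ v : AddCircle T)) (src e)) := by
    intro θ e
    rw [← Function.Periodic.lift_coe hper (grad src tgt θ e), ← hWbdef]
    rfl
  calc ∫ θ, ∏ e, wgt p (grad src tgt θ e + grad src tgt c e) ∂ torusBox V
      = ∫ θ, F ((fun v => (θ v : AddCircle T)) + (fun v => (c v : AddCircle T))) ∂ torusBox V := by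
        refine integral_congr_ae (Filter.EventuallyEq.of_eq (funext fun θ => ?_))
        rw [hFdef]
        exact Finset.prod_congr rfl fun e _ => hcoe θ e
    _ = ∫ x, F (x + (fun v => (c v : AddCircle T)))
          ∂ (Measure.pi fun _ => (volume : Measure (AddCircle T))) := by
        exact key (fun x => F (x + fun v => (c v : AddCircle T)))
          ((hFc.comp (continuous_add_right (fun v => (c v : AddCircle T)))).aestronglyMeasurable)
    _ = ∫ x, F x ∂ (Measure.pi fun _ => (volume : Measure (AddCircle T))) :=
        integral_add_right_eq_self F _
    _ = ∫ θ, F (fun v => (θ v : AddCircle T)) ∂ torusBox V := (key F hFc.aestronglyMeasurable).symm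
    _ = ∫ θ, ∏ e, wgt p (grad src tgt θ e) ∂ torusBox V := by
        refine integral_congr_ae (Filter.EventuallyEq.of_eq (funext fun θ => ?_))
        rw [hFdef]
        exact (Finset.prod_congr rfl fun e _ => (hcoe0 θ e).symm)



end S2

section S3
variable {p : ℤ → ℝ}

lemma wgt_lower (hw : ∀ α : ℝ, 0 < wgt p α) (hc : Continuous (wgt p)) :
    ∃ m : ℝ, 0 < m ∧ ∀ x : ℝ, m ≤ wgt p x := by
  obtain ⟨x0, hx0, hmin⟩ := isCompact_Icc.exists_isMinOn (α := ℝ) (s := Set.Icc 0 (2 * π))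
    ⟨0, by constructor <;> [rfl; positivity]⟩ hc.continuousOn
  refine ⟨wgt p x0, hw x0, fun x => ?_⟩
  obtain ⟨y, hy, hxy⟩ := (wgt_periodic p).exists_mem_Ico₀ Real.two_pi_pos x
  rw [hxy]
  exact hmin ⟨hy.1, hy.2.le⟩

lemma abs_prod_le {E : Type*} (S : Finset E) (x : E → ℝ) {B : ℝ} (hB : 0 ≤ B)
    (h : ∀ e, |x e| ≤ B) : |∏ e ∈ S, x e| ≤ B ^ S.card := by
  rw [Finset.abs_prod]
  calc ∏ e ∈ S, |x e| ≤ ∏ _e ∈ S, B :=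
        Finset.prod_le_prod (fun _ _ => abs_nonneg _) (fun e _ => h e)
    _ = B ^ S.card := Finset.prod_const B

lemma integrable_bdd {V : Type*} [Fintype V] {F : (V → ℝ) → ℝ} (hc : Continuous F)
    {C : ℝ} (hb : ∀ θ, |F θ| ≤ C) : Integrable F (torusBox V) :=
  Integrable.mono' (integrable_const C) hc.aestronglyMeasurable
    (Filter.Eventually.of_forall (by simpa [Real.norm_eq_abs] using hb))


end S3
end SpinAux

namespace Core
open SpinAux
open SpinAux

variable {V E : Type*} [Fintype V] [Fintype E] [DecidableEq E]
variable (src tgt : E → V) (p : ℤ → ℝ) (f g : V → ℝ)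

/-- The product weight. -/
def Pprod (θ : V → ℝ) : ℝ := ∏ e, wgt p (grad src tgt θ e)

/-- First-derivative integrand, with `f`-direction shift `s`. -/
def QS (s : ℝ) (θ : V → ℝ) : ℝ :=
  ∑ e, (∏ c ∈ Finset.univ.erase e, wgt p (grad src tgt θ c + s * grad src tgt f c)) *
    (W1 p (grad src tgt θ e + s * grad src tgt f e) * grad src tgt g e)

/-- Second-derivative integrand. -/
def RR (θ : V → ℝ) : ℝ :=
  ∑ e, ((∑ c ∈ Finset.univ.erase e,
        (∏ c' ∈ (Finset.univ.erase e).erase c, wgt p (grad src tgt θ c')) *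
          (W1 p (grad src tgt θ c) * grad src tgt f c)) *
      (W1 p (grad src tgt θ e) * grad src tgt g e)
    + (∏ c ∈ Finset.univ.erase e, wgt p (grad src tgt θ c)) *
      (W2 p (grad src tgt θ e) * grad src tgt f e * grad src tgt g e))

variable {p}
variable (hnonneg : ∀ n : ℤ, 0 ≤ p n) (hsum : Summable fun n : ℤ => (n : ℝ) ^ 2 * p n)
include hnonneg hsum

omit hnonneg hsum in
lemma contJ (e : E) : Continuous fun θ : V → ℝ => grad src tgt θ e :=
  (continuous_apply (tgt e)).sub (continuous_apply (src e))

omit hnonneg hsum in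
lemma hgc (s t : ℝ) (e : E) :
    grad src tgt (fun v => s * f v + t * g v) e
      = s * grad src tgt f e + t * grad src tgt g e := by
  simp only [grad]; ring

lemma ZB (s : ℝ) : ∫ θ, QS src tgt p f g s θ ∂ torusBox V = 0 := by
  classical
  set μ := torusBox V
  set B0 : ℝ := ∑' n : ℤ, p n with hB0def
  set B1 : ℝ := ∑' n : ℤ, |(n : ℝ)| * p n with hB1def
  have hB0 : 0 ≤ B0 := tsum_nonneg hnonneg
  have hB1 : 0 ≤ B1 := tsum_nonneg fun n => mul_nonneg (abs_nonneg _) (hnonneg n)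
  set F : ℝ → (V → ℝ) → ℝ := fun t θ =>
    ∏ e, wgt p (grad src tgt θ e + (s * grad src tgt f e + t * grad src tgt g e)) with hF
  set F' : ℝ → (V → ℝ) → ℝ := fun t θ =>
    ∑ e, (∏ c ∈ Finset.univ.erase e,
        wgt p (grad src tgt θ c + (s * grad src tgt f c + t * grad src tgt g c))) *
      (W1 p (grad src tgt θ e + (s * grad src tgt f e + t * grad src tgt g e)) *
        grad src tgt g e) with hF'
  have hFcont : ∀ t, Continuous (F t) := by
    intro t
    apply continuous_finset_prod
    intro e _
    exact (contW hnonneg hsum).comp ((contJ src tgt e).add continuous_const)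
  have hF'cont : ∀ t, Continuous (F' t) := by
    intro t
    apply continuous_finset_sum
    intro e _
    refine Continuous.mul ?_ (Continuous.mul ?_ continuous_const)
    · apply continuous_finset_prod
      intro c _
      exact (contW hnonneg hsum).comp ((contJ src tgt c).add continuous_const)
    · exact (contW1 hnonneg hsum).comp ((contJ src tgt e).add continuous_const)
  have hFbd : ∀ t θ, |F t θ| ≤ B0 ^ (Finset.univ : Finset E).card := by
    intro t θ
    exact abs_prod_le _ _ hB0 (fun e => absW hnonneg hsum _)
  have hF'bd : ∀ t θ, |F' t θ|
      ≤ ∑ e : E, B0 ^ (Finset.univ.erase e).card * (B1 * |grad src tgt g e|) := by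
    intro t θ
    refine (Finset.abs_sum_le_sum_abs _ _).trans (Finset.sum_le_sum fun e _ => ?_)
    rw [abs_mul, abs_mul]
    refine mul_le_mul (abs_prod_le _ _ hB0 (fun c => absW hnonneg hsum _))
      (mul_le_mul_of_nonneg_right (absW1 hnonneg hsum _) (abs_nonneg _))
      (mul_nonneg (abs_nonneg _) (abs_nonneg _)) (pow_nonneg hB0 _)
  have hdiff : ∀ θ : V → ℝ, ∀ t : ℝ, HasDerivAt (F · θ) (F' t θ) t := by
    intro θ t
    have hterm : ∀ e ∈ (Finset.univ : Finset E), HasDerivAt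
        (fun t => wgt p (grad src tgt θ e + (s * grad src tgt f e + t * grad src tgt g e)))
        (W1 p (grad src tgt θ e + (s * grad src tgt f e + t * grad src tgt g e)) *
          grad src tgt g e) t := by
      intro e _
      have hinner : HasDerivAt
          (fun t : ℝ => grad src tgt θ e + (s * grad src tgt f e + t * grad src tgt g e))
          (grad src tgt g e) t := by
        simpa using (((hasDerivAt_mul_const (grad src tgt g e)).const_add
          (s * grad src tgt f e)).const_add (grad src tgt θ e))
      exact (hasDerivW hnonneg hsum _).comp t hinner
    simpa [hF, hF', smul_eq_mul] using HasDerivAt.fun_finsetProd hterm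
  have hkey := hasDerivAt_integral_of_dominated_loc_of_deriv_le (μ := μ)
    (F := F) (F' := F') (x₀ := 0)
    (bound := fun _ => ∑ e : E, B0 ^ (Finset.univ.erase e).card * (B1 * |grad src tgt g e|))
    Filter.univ_mem
    (Filter.Eventually.of_forall fun t => (hFcont t).aestronglyMeasurable)
    (integrable_bdd (hFcont 0) (hFbd 0))
    ((hF'cont 0).aestronglyMeasurable)
    (Filter.Eventually.of_forall fun θ => fun t _ => hF'bd t θ)
    (integrable_const _)
    (Filter.Eventually.of_forall fun θ => fun t _ => hdiff θ t)
  · obtain ⟨-, hder⟩ := hkey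
    have hconst : (fun t => ∫ θ, F t θ ∂μ) = fun _ => ∫ θ, Pprod src tgt p θ ∂μ := by
      funext t
      have h1 : ∀ θ : V → ℝ, F t θ = ∏ e, wgt p (grad src tgt θ e +
          grad src tgt (fun v => s * f v + t * g v) e) := by
        intro θ
        exact Finset.prod_congr rfl fun e _ => by rw [hgc src tgt f g s t e]
      calc ∫ θ, F t θ ∂μ = ∫ θ, ∏ e, wgt p (grad src tgt θ e +
            grad src tgt (fun v => s * f v + t * g v) e) ∂μ := by
            exact integral_congr_ae (Filter.Eventually.of_forall h1)
        _ = ∫ θ, ∏ e, wgt p (grad src tgt θ e) ∂μ :=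
            shift_invariant src tgt p (contW hnonneg hsum) _
        _ = ∫ θ, Pprod src tgt p θ ∂μ := rfl
    have hzero : HasDerivAt (fun t => ∫ θ, F t θ ∂μ) 0 0 := by
      rw [hconst]; exact hasDerivAt_const _ _
    have h0 : ∫ θ, F' 0 θ ∂μ = 0 := hder.unique hzero
    rw [← h0]
    refine integral_congr_ae (Filter.Eventually.of_forall fun θ => ?_)
    simp [QS, hF']

lemma ZC : ∫ θ, RR src tgt p f g θ ∂ torusBox V = 0 := by
  classical
  set μ := torusBox V
  set B0 : ℝ := ∑' n : ℤ, p n with hB0def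
  set B1 : ℝ := ∑' n : ℤ, |(n : ℝ)| * p n with hB1def
  set B2 : ℝ := ∑' n : ℤ, (n : ℝ) ^ 2 * p n with hB2def
  have hB0 : 0 ≤ B0 := tsum_nonneg hnonneg
  have hB1 : 0 ≤ B1 := tsum_nonneg fun n => mul_nonneg (abs_nonneg _) (hnonneg n)
  have hB2 : 0 ≤ B2 := tsum_nonneg fun n => mul_nonneg (sq_nonneg _) (hnonneg n)
  set G : ℝ → (V → ℝ) → ℝ := fun s θ => QS src tgt p f g s θ with hG
  set G' : ℝ → (V → ℝ) → ℝ := fun s θ =>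
    ∑ e, ((∑ c ∈ Finset.univ.erase e,
        (∏ c' ∈ (Finset.univ.erase e).erase c, wgt p (grad src tgt θ c' + s * grad src tgt f c')) *
          (W1 p (grad src tgt θ c + s * grad src tgt f c) * grad src tgt f c)) *
      (W1 p (grad src tgt θ e + s * grad src tgt f e) * grad src tgt g e)
    + (∏ c ∈ Finset.univ.erase e, wgt p (grad src tgt θ c + s * grad src tgt f c)) *
      (W2 p (grad src tgt θ e + s * grad src tgt f e) * grad src tgt f e * grad src tgt g e)) with hG'
  have hGcont : ∀ s, Continuous (G s) := by
    intro s
    apply continuous_finset_sum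
    intro e _
    refine Continuous.mul ?_ (Continuous.mul ?_ continuous_const)
    · apply continuous_finset_prod
      intro c _
      exact (contW hnonneg hsum).comp ((contJ src tgt c).add continuous_const)
    · exact (contW1 hnonneg hsum).comp ((contJ src tgt e).add continuous_const)
  have hG'cont : ∀ s, Continuous (G' s) := by
    intro s
    apply continuous_finset_sum
    intro e _
    apply Continuous.add
    · refine Continuous.mul ?_ (Continuous.mul ?_ continuous_const)
      · apply continuous_finset_sum
        intro c _
        refine Continuous.mul ?_ (Continuous.mul ?_ continuous_const)
        · apply continuous_finset_prod
          intro c' _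
          exact (contW hnonneg hsum).comp ((contJ src tgt c').add continuous_const)
        · exact (contW1 hnonneg hsum).comp ((contJ src tgt c).add continuous_const)
      · exact (contW1 hnonneg hsum).comp ((contJ src tgt e).add continuous_const)
    · refine Continuous.mul ?_ (Continuous.mul (Continuous.mul ?_ continuous_const)
        continuous_const)
      · apply continuous_finset_prod
        intro c _
        exact (contW hnonneg hsum).comp ((contJ src tgt c).add continuous_const)
      · exact (contW2 hnonneg hsum).comp ((contJ src tgt e).add continuous_const)
  have hGbd : ∀ s θ, |G s θ|
      ≤ ∑ e : E, B0 ^ (Finset.univ.erase e).card * (B1 * |grad src tgt g e|) := by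
    intro s θ
    refine (Finset.abs_sum_le_sum_abs _ _).trans (Finset.sum_le_sum fun e _ => ?_)
    rw [abs_mul, abs_mul]
    exact mul_le_mul (abs_prod_le _ _ hB0 (fun c => absW hnonneg hsum _))
      (mul_le_mul_of_nonneg_right (absW1 hnonneg hsum _) (abs_nonneg _))
      (mul_nonneg (abs_nonneg _) (abs_nonneg _)) (pow_nonneg hB0 _)
  have hG'bd : ∀ s θ, |G' s θ|
      ≤ ∑ e : E, ((∑ c ∈ Finset.univ.erase e,
          B0 ^ ((Finset.univ.erase e).erase c).card * (B1 * |grad src tgt f c|)) *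
            (B1 * |grad src tgt g e|)
        + B0 ^ (Finset.univ.erase e).card * (B2 * |grad src tgt f e| * |grad src tgt g e|)) := by
    intro s θ
    refine (Finset.abs_sum_le_sum_abs _ _).trans (Finset.sum_le_sum fun e _ => ?_)
    refine (abs_add_le _ _).trans ?_
    apply add_le_add
    · rw [abs_mul, abs_mul]
      refine mul_le_mul ?_
        (mul_le_mul_of_nonneg_right (absW1 hnonneg hsum _) (abs_nonneg _))
        (mul_nonneg (abs_nonneg _) (abs_nonneg _)) ?_
      · refine (Finset.abs_sum_le_sum_abs _ _).trans (Finset.sum_le_sum fun c _ => ?_)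
        rw [abs_mul, abs_mul]
        exact mul_le_mul (abs_prod_le _ _ hB0 (fun c' => absW hnonneg hsum _))
          (mul_le_mul_of_nonneg_right (absW1 hnonneg hsum _) (abs_nonneg _))
          (mul_nonneg (abs_nonneg _) (abs_nonneg _)) (pow_nonneg hB0 _)
      · exact Finset.sum_nonneg fun c _ => mul_nonneg (pow_nonneg hB0 _)
          (mul_nonneg hB1 (abs_nonneg _))
    · rw [abs_mul, abs_mul, abs_mul]
      refine mul_le_mul (abs_prod_le _ _ hB0 (fun c => absW hnonneg hsum _))
        ?_ ?_ (pow_nonneg hB0 _)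
      · exact mul_le_mul_of_nonneg_right
          (mul_le_mul_of_nonneg_right (absW2 hnonneg hsum _) (abs_nonneg _)) (abs_nonneg _)
      · exact mul_nonneg (mul_nonneg (abs_nonneg _) (abs_nonneg _)) (abs_nonneg _)
  have hdiff : ∀ θ : V → ℝ, ∀ s : ℝ, HasDerivAt (G · θ) (G' s θ) s := by
    intro θ s
    have hterm : ∀ e ∈ (Finset.univ : Finset E), HasDerivAt
        (fun s => (∏ c ∈ Finset.univ.erase e,
            wgt p (grad src tgt θ c + s * grad src tgt f c)) *
          (W1 p (grad src tgt θ e + s * grad src tgt f e) * grad src tgt g e))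
        ((∑ c ∈ Finset.univ.erase e,
            (∏ c' ∈ (Finset.univ.erase e).erase c,
              wgt p (grad src tgt θ c' + s * grad src tgt f c')) *
              (W1 p (grad src tgt θ c + s * grad src tgt f c) * grad src tgt f c)) *
            (W1 p (grad src tgt θ e + s * grad src tgt f e) * grad src tgt g e)
          + (∏ c ∈ Finset.univ.erase e, wgt p (grad src tgt θ c + s * grad src tgt f c)) *
            (W2 p (grad src tgt θ e + s * grad src tgt f e) * grad src tgt f e *
              grad src tgt g e)) s := by
      intro e _
      have hinner : ∀ c : E, HasDerivAt
          (fun s : ℝ => grad src tgt θ c + s * grad src tgt f c) (grad src tgt f c) s :=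
        fun c => by simpa using ((hasDerivAt_mul_const (grad src tgt f c)).const_add
          (grad src tgt θ c))
      have hA : HasDerivAt
          (fun s => ∏ c ∈ Finset.univ.erase e,
            wgt p (grad src tgt θ c + s * grad src tgt f c))
          (∑ c ∈ Finset.univ.erase e,
            (∏ c' ∈ (Finset.univ.erase e).erase c,
              wgt p (grad src tgt θ c' + s * grad src tgt f c')) *
              (W1 p (grad src tgt θ c + s * grad src tgt f c) * grad src tgt f c)) s := by
        simpa [smul_eq_mul] using HasDerivAt.fun_finsetProd
          (fun c (_ : c ∈ Finset.univ.erase e) =>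
            (hasDerivW hnonneg hsum _).comp s (hinner c))
      have hB : HasDerivAt
          (fun s => W1 p (grad src tgt θ e + s * grad src tgt f e) * grad src tgt g e)
          (W2 p (grad src tgt θ e + s * grad src tgt f e) * grad src tgt f e *
            grad src tgt g e) s :=
        ((hasDerivW1 hnonneg hsum _).comp s (hinner e)).mul_const _
      exact hA.mul hB
    simpa [hG, hG', QS] using HasDerivAt.fun_sum hterm
  have hkey := hasDerivAt_integral_of_dominated_loc_of_deriv_le (μ := μ)
    (F := G) (F' := G') (x₀ := 0)
    (bound := fun _ => ∑ e : E, ((∑ c ∈ Finset.univ.erase e,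
          B0 ^ ((Finset.univ.erase e).erase c).card * (B1 * |grad src tgt f c|)) *
            (B1 * |grad src tgt g e|)
        + B0 ^ (Finset.univ.erase e).card * (B2 * |grad src tgt f e| * |grad src tgt g e|)))
    Filter.univ_mem
    (Filter.Eventually.of_forall fun s => (hGcont s).aestronglyMeasurable)
    (integrable_bdd (hGcont 0) (hGbd 0))
    ((hG'cont 0).aestronglyMeasurable)
    (Filter.Eventually.of_forall fun θ => fun s _ => hG'bd s θ)
    (integrable_const _)
    (Filter.Eventually.of_forall fun θ => fun s _ => hdiff θ s)
  obtain ⟨-, hder⟩ := hkey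
  have hconst : (fun s => ∫ θ, G s θ ∂μ) = fun _ => 0 := by
    funext s
    exact ZB src tgt f g hnonneg hsum s
  have hzero : HasDerivAt (fun s => ∫ θ, G s θ ∂μ) 0 0 := by
    rw [hconst]; exact hasDerivAt_const _ _
  have h0 : ∫ θ, G' 0 θ ∂μ = 0 := hder.unique hzero
  rw [← h0]
  refine integral_congr_ae (Filter.Eventually.of_forall fun θ => ?_)
  simp [RR, hG']

variable (hw : ∀ α : ℝ, 0 < wgt p α)
include hw

lemma pointwise (θ : V → ℝ) :
    ((∑ e, deriv (spinU p) (grad src tgt θ e) * grad src tgt f e) *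
        (∑ e, deriv (spinU p) (grad src tgt θ e) * grad src tgt g e)) *
      ∏ e, wgt p (grad src tgt θ e)
    = RR src tgt p f g θ
      + ∑ e, (grad src tgt f e * grad src tgt g e) *
          (deriv (deriv (spinU p)) (grad src tgt θ e) * ∏ c, wgt p (grad src tgt θ c)) := by
  classical
  have hwne : ∀ e : E, wgt p (grad src tgt θ e) ≠ 0 := fun e => (hw _).ne'
  have hP : ∀ e : E, (∏ c, wgt p (grad src tgt θ c))
      = wgt p (grad src tgt θ e) * ∏ c ∈ Finset.univ.erase e, wgt p (grad src tgt θ c) :=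
    fun e => (Finset.mul_prod_erase _ _ (Finset.mem_univ e)).symm
  have hP2 : ∀ e : E, ∀ c ∈ Finset.univ.erase e,
      (∏ c' ∈ Finset.univ.erase e, wgt p (grad src tgt θ c'))
        = wgt p (grad src tgt θ c) *
            ∏ c' ∈ (Finset.univ.erase e).erase c, wgt p (grad src tgt θ c') :=
    fun e c hc => (Finset.mul_prod_erase _ _ hc).symm
  simp only [derivU hnonneg hsum hw, derivU2 hnonneg hsum hw]
  rw [Finset.sum_mul_sum]
  simp only [Finset.sum_mul]
  rw [Finset.sum_comm, RR, ← Finset.sum_add_distrib]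
  refine Finset.sum_congr rfl fun e _ => ?_
  rw [← Finset.add_sum_erase _ _ (Finset.mem_univ e), Finset.sum_mul]
  have hoff : ∀ c ∈ Finset.univ.erase e,
      -(W1 p (grad src tgt θ c) / wgt p (grad src tgt θ c)) * grad src tgt f c *
          (-(W1 p (grad src tgt θ e) / wgt p (grad src tgt θ e)) * grad src tgt g e) *
          ∏ c', wgt p (grad src tgt θ c')
        = (∏ c' ∈ (Finset.univ.erase e).erase c, wgt p (grad src tgt θ c')) *
            (W1 p (grad src tgt θ c) * grad src tgt f c) *
            (W1 p (grad src tgt θ e) * grad src tgt g e) := by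
    intro c hc
    rw [hP e, hP2 e c hc]
    have h1 := hwne e
    have h2 := hwne c
    field_simp
  rw [Finset.sum_congr rfl hoff]
  have hdiag :
      -(W1 p (grad src tgt θ e) / wgt p (grad src tgt θ e)) * grad src tgt f e *
          (-(W1 p (grad src tgt θ e) / wgt p (grad src tgt θ e)) * grad src tgt g e) *
          ∏ c', wgt p (grad src tgt θ c')
        = (∏ c ∈ Finset.univ.erase e, wgt p (grad src tgt θ c)) *
            (W2 p (grad src tgt θ e) * grad src tgt f e * grad src tgt g e)
          + grad src tgt f e * grad src tgt g e *
            ((W1 p (grad src tgt θ e) * W1 p (grad src tgt θ e) -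
                W2 p (grad src tgt θ e) * wgt p (grad src tgt θ e)) /
                wgt p (grad src tgt θ e) ^ 2 *
              ∏ c, wgt p (grad src tgt θ c)) := by
    rw [hP e]
    have h1 := hwne e
    field_simp
    ring
  rw [hdiag]
  ring

lemma core :
    ∫ θ, ((∑ e, deriv (spinU p) (grad src tgt θ e) * grad src tgt f e) *
        (∑ e, deriv (spinU p) (grad src tgt θ e) * grad src tgt g e)) *
      ∏ e, wgt p (grad src tgt θ e) ∂ torusBox V
    = ∑ e, (∫ θ, deriv (deriv (spinU p)) (grad src tgt θ e) *
          ∏ c, wgt p (grad src tgt θ c) ∂ torusBox V) *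
        (grad src tgt f e * grad src tgt g e) := by
  classical
  set μ := torusBox V
  set B0 : ℝ := ∑' n : ℤ, p n with hB0def
  set B1 : ℝ := ∑' n : ℤ, |(n : ℝ)| * p n with hB1def
  set B2 : ℝ := ∑' n : ℤ, (n : ℝ) ^ 2 * p n with hB2def
  have hB0 : 0 ≤ B0 := tsum_nonneg hnonneg
  have hB1 : 0 ≤ B1 := tsum_nonneg fun n => mul_nonneg (abs_nonneg _) (hnonneg n)
  have hB2 : 0 ≤ B2 := tsum_nonneg fun n => mul_nonneg (sq_nonneg _) (hnonneg n)
  obtain ⟨m, hm, hmle⟩ := wgt_lower hw (contW hnonneg hsum)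
  -- the second derivative of 𝒰 as a concrete function
  have hu2eq : deriv (deriv (spinU p))
      = fun t => (W1 p t * W1 p t - W2 p t * wgt p t) / wgt p t ^ 2 :=
    funext (derivU2 hnonneg hsum hw)
  have hu1eq : deriv (spinU p) = fun t => -(W1 p t / wgt p t) :=
    funext (derivU hnonneg hsum hw)
  have hu2cont : Continuous (deriv (deriv (spinU p))) := by
    rw [hu2eq]
    exact Continuous.div
      (((contW1 hnonneg hsum).mul (contW1 hnonneg hsum)).sub
        ((contW2 hnonneg hsum).mul (contW hnonneg hsum)))
      ((contW hnonneg hsum).pow 2) (fun x => pow_ne_zero 2 (hw x).ne')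
  have hu1cont : Continuous (deriv (spinU p)) := by
    rw [hu1eq]
    exact ((contW1 hnonneg hsum).div (contW hnonneg hsum) (fun x => (hw x).ne')).neg
  have hu1bd : ∀ t : ℝ, |deriv (spinU p) t| ≤ B1 / m := by
    intro t
    rw [hu1eq]
    simp only [abs_neg, abs_div]
    refine div_le_div₀ hB1 (absW1 hnonneg hsum t) hm ?_
    rw [abs_of_pos (hw t)]
    exact hmle t
  have hu2bd : ∀ t : ℝ, |deriv (deriv (spinU p)) t| ≤ (B1 * B1 + B2 * B0) / (m * m) := by
    intro t
    rw [hu2eq]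
    simp only [abs_div]
    refine div_le_div₀ (by positivity) ?_ (by positivity) ?_
    · refine (abs_sub _ _).trans ?_
      rw [abs_mul, abs_mul]
      exact add_le_add
        (mul_le_mul (absW1 hnonneg hsum t) (absW1 hnonneg hsum t) (abs_nonneg _) hB1)
        (mul_le_mul (absW2 hnonneg hsum t) (absW hnonneg hsum t) (abs_nonneg _) hB2)
    · rw [sq, abs_of_pos (mul_pos (hw t) (hw t))]
      exact mul_le_mul (hmle t) (hmle t) hm.le ((hw t).le.trans (le_refl _)) |>.trans
        (le_refl _)
  -- integrability of each piece
  have hPcont : Continuous fun θ : V → ℝ => ∏ c, wgt p (grad src tgt θ c) := by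
    apply continuous_finset_prod
    intro c _
    exact (contW hnonneg hsum).comp (contJ src tgt c)
  have hPbd : ∀ θ : V → ℝ, |∏ c, wgt p (grad src tgt θ c)| ≤ B0 ^ (Finset.univ : Finset E).card :=
    fun θ => abs_prod_le _ _ hB0 (fun c => absW hnonneg hsum _)
  have hIu2 : ∀ e : E, Integrable (fun θ => deriv (deriv (spinU p)) (grad src tgt θ e) *
      ∏ c, wgt p (grad src tgt θ c)) μ := by
    intro e
    refine integrable_bdd ((hu2cont.comp (contJ src tgt e)).mul hPcont)
      (C := (B1 * B1 + B2 * B0) / (m * m) * B0 ^ (Finset.univ : Finset E).card) ?_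
    intro θ
    rw [abs_mul]
    exact mul_le_mul (hu2bd _) (hPbd θ) (abs_nonneg _) (by positivity)
  have hILHS : Integrable (fun θ =>
      ((∑ e, deriv (spinU p) (grad src tgt θ e) * grad src tgt f e) *
        (∑ e, deriv (spinU p) (grad src tgt θ e) * grad src tgt g e)) *
      ∏ e, wgt p (grad src tgt θ e)) μ := by
    refine integrable_bdd ?_ (C := ((∑ e : E, B1 / m * |grad src tgt f e|) *
      (∑ e : E, B1 / m * |grad src tgt g e|)) * B0 ^ (Finset.univ : Finset E).card) ?_
    · refine Continuous.mul (Continuous.mul ?_ ?_) hPcont <;>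
      · apply continuous_finset_sum
        intro e _
        exact (hu1cont.comp (contJ src tgt e)).mul continuous_const
    · intro θ
      rw [abs_mul, abs_mul]
      have hsb : ∀ (h : V → ℝ), |∑ e, deriv (spinU p) (grad src tgt θ e) * grad src tgt h e|
          ≤ ∑ e : E, B1 / m * |grad src tgt h e| := by
        intro h
        refine (Finset.abs_sum_le_sum_abs _ _).trans (Finset.sum_le_sum fun e _ => ?_)
        rw [abs_mul]
        exact mul_le_mul_of_nonneg_right (hu1bd _) (abs_nonneg _)
      refine mul_le_mul (mul_le_mul (hsb f) (hsb g) (abs_nonneg _) ?_) (hPbd θ)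
        (abs_nonneg _) ?_
      · exact Finset.sum_nonneg fun e _ => mul_nonneg (by positivity) (abs_nonneg _)
      · positivity
  have hSgInt : Integrable (fun θ => ∑ e, (grad src tgt f e * grad src tgt g e) *
      (deriv (deriv (spinU p)) (grad src tgt θ e) * ∏ c, wgt p (grad src tgt θ c))) μ :=
    integrable_finset_sum _ (fun e _ => (hIu2 e).const_mul _)
  have hsplit : (∫ θ, ((∑ e, deriv (spinU p) (grad src tgt θ e) * grad src tgt f e) *
        (∑ e, deriv (spinU p) (grad src tgt θ e) * grad src tgt g e)) *
      ∏ e, wgt p (grad src tgt θ e) ∂μ)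
      - ∫ θ, ∑ e, (grad src tgt f e * grad src tgt g e) *
          (deriv (deriv (spinU p)) (grad src tgt θ e) * ∏ c, wgt p (grad src tgt θ c)) ∂μ
      = 0 := by
    rw [← integral_sub hILHS hSgInt]
    have heq : ∀ θ : V → ℝ,
        (((∑ e, deriv (spinU p) (grad src tgt θ e) * grad src tgt f e) *
          (∑ e, deriv (spinU p) (grad src tgt θ e) * grad src tgt g e)) *
          ∏ e, wgt p (grad src tgt θ e))
        - (∑ e, (grad src tgt f e * grad src tgt g e) *
            (deriv (deriv (spinU p)) (grad src tgt θ e) * ∏ c, wgt p (grad src tgt θ c)))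
        = RR src tgt p f g θ := by
      intro θ
      rw [pointwise src tgt f g hnonneg hsum hw θ]
      ring
    calc ∫ θ, (((∑ e, deriv (spinU p) (grad src tgt θ e) * grad src tgt f e) *
          (∑ e, deriv (spinU p) (grad src tgt θ e) * grad src tgt g e)) *
          ∏ e, wgt p (grad src tgt θ e))
        - (∑ e, (grad src tgt f e * grad src tgt g e) *
            (deriv (deriv (spinU p)) (grad src tgt θ e) *
              ∏ c, wgt p (grad src tgt θ c))) ∂μ
        = ∫ θ, RR src tgt p f g θ ∂μ :=
          integral_congr_ae (Filter.Eventually.of_forall heq)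
      _ = 0 := ZC src tgt f g hnonneg hsum
  have hmain : ∫ θ, ((∑ e, deriv (spinU p) (grad src tgt θ e) * grad src tgt f e) *
        (∑ e, deriv (spinU p) (grad src tgt θ e) * grad src tgt g e)) *
      ∏ e, wgt p (grad src tgt θ e) ∂μ
      = ∫ θ, ∑ e, (grad src tgt f e * grad src tgt g e) *
          (deriv (deriv (spinU p)) (grad src tgt θ e) * ∏ c, wgt p (grad src tgt θ c)) ∂μ := by
    linarith [hsplit]
  rw [hmain, integral_finset_sum _ (fun e _ => (hIu2 e).const_mul _)]
  refine Finset.sum_congr rfl fun e _ => ?_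
  rw [MeasureTheory.integral_const_mul]
  ring

end Core

/-- **Gradient–gradient covariance identity for the spin model.**
For all `f, g : V → ℝ`:
`μ_★[(𝒰'(J), df)(𝒰'(J), dg)] = Σ_e μ_★[𝒰''(J_e)] (df)_e (dg)_e`, with `J = dθ`. -/
theorem gradient_gradient_covariance
    {V E : Type*} [Fintype V] [Fintype E]
    (src tgt : E → V)
    (p : ℤ → ℝ)
    (hsym : ∀ n : ℤ, p (-n) = p n)
    (hnonneg : ∀ n : ℤ, 0 ≤ p n)
    (hsum : Summable fun n : ℤ => (n : ℝ) ^ 2 * p n)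
    (hw : ∀ α : ℝ, 0 < wgt p α)
    (f g : V → ℝ) :
    starSpinExp src tgt p
        (fun θ => (∑ e, deriv (spinU p) (grad src tgt θ e) * grad src tgt f e) *
          (∑ e, deriv (spinU p) (grad src tgt θ e) * grad src tgt g e))
      = ∑ e, starSpinExp src tgt p
          (fun θ => deriv (deriv (spinU p)) (grad src tgt θ e)) *
            (grad src tgt f e * grad src tgt g e) := by
  classical
  simp only [starSpinExp]
  rw [Core.core src tgt f g hnonneg hsum hw, Finset.sum_div]
  exact Finset.sum_congr rfl fun e _ => by ring
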